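/- Let n = 2^k and let S be the conditional shift operator on C^{⌊n/2⌋+1} ⊗ C^2 ⊗ C^n. Suppose Magnus plays unitaries M_i preparing his register in basis state |m_i⟩ according to any fixed classical sequence, and Derek plays D_1 = H (Hadamard) on his direction register at step 1 and identity afterwards, starting from |0⟩⊗|0⟩⊗|0⟩. Then after any number t ≥ 1 of steps, the reduced state of the position register assigns probability at most 1/2 to each basis position other than those reachable identically in both branches; in particular at most two positions are ever 'visited' (measured with probability 1). -/
import Mathlib


open scoped BigOperators

/-- The joint state (direction register ⊗ position register) of the walk where
Magnus plays the classical magnitude sequence `m` and Derek applies the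
Hadamard gate at step 1 and the identity afterwards, starting from `|0⟩⊗|0⟩`;
each step concludes with the conditional shift by `± m t`. -/
noncomputable def hadamardWalk (n : ℕ) (m : ℕ → ZMod n) : ℕ → Fin 2 × ZMod n → ℂ
  | 0 => fun p => if p = (0, 0) then 1 else 0
  | 1 => fun p =>
      if p = (0, m 0) then ((1 / Real.sqrt 2 : ℝ) : ℂ)
      else if p = (1, - m 0) then ((1 / Real.sqrt 2 : ℝ) : ℂ) else 0
  | t + 2 => fun p =>
      if p.1 = 0 then hadamardWalk n m (t + 1) (0, p.2 - m (t + 1))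
      else hadamardWalk n m (t + 1) (1, p.2 + m (t + 1))

lemma walk_formula (n : ℕ) (m : ℕ → ZMod n) :
    ∀ t : ℕ, 1 ≤ t → ∀ p : Fin 2 × ZMod n,
      hadamardWalk n m t p =
        if p = (0, ∑ i ∈ Finset.range t, m i) then ((1 / Real.sqrt 2 : ℝ) : ℂ)
        else if p = (1, -∑ i ∈ Finset.range t, m i) then ((1 / Real.sqrt 2 : ℝ) : ℂ)
        else 0 := by
  intro t
  induction t with
  | zero => intro h; omega
  | succ t ih =>
    intro _ p
    match t with
    | 0 =>
      simp [hadamardWalk, Finset.sum_range_one]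
    | Nat.succ s =>
      have hih := ih (by omega)
      obtain ⟨d, x⟩ := p
      show hadamardWalk n m (s + 2) (d, x) = _
      simp only [hadamardWalk]
      by_cases hd : d = 0
      · subst hd
        rw [if_pos rfl, hih (0, x - m (s + 1))]
        have h1 : (((0 : Fin 2), x - m (s + 1)) = (0, ∑ i ∈ Finset.range (s + 1), m i)) ↔
            (((0 : Fin 2), x) = (0, ∑ i ∈ Finset.range (s + 1 + 1), m i)) := by
          simp only [Prod.mk.injEq, true_and, Finset.sum_range_succ]
          constructor <;> intro h <;> linear_combination h
        have h2 : (((0 : Fin 2), x - m (s + 1)) = (1, -∑ i ∈ Finset.range (s + 1), m i)) ↔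
            (((0 : Fin 2), x) = (1, -∑ i ∈ Finset.range (s + 1 + 1), m i)) := by
          simp [Prod.ext_iff]
        rw [if_congr h1 rfl rfl, if_congr h2 rfl rfl]
      · have hd1 : d = 1 := by omega
        subst hd1
        rw [if_neg (by simp), hih (1, x + m (s + 1))]
        have h1 : (((1 : Fin 2), x + m (s + 1)) = (0, ∑ i ∈ Finset.range (s + 1), m i)) ↔
            (((1 : Fin 2), x) = (0, ∑ i ∈ Finset.range (s + 1 + 1), m i)) := by
          simp [Prod.ext_iff]
        have h2 : (((1 : Fin 2), x + m (s + 1)) = (1, -∑ i ∈ Finset.range (s + 1), m i)) ↔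
            (((1 : Fin 2), x) = (1, -∑ i ∈ Finset.range (s + 1 + 1), m i)) := by
          simp only [Prod.mk.injEq, true_and, Finset.sum_range_succ]
          constructor <;> intro h <;> linear_combination h
        rw [if_congr h1 rfl rfl, if_congr h2 rfl rfl]

lemma norm_c : ‖((1 / Real.sqrt 2 : ℝ) : ℂ)‖ ^ 2 = 1 / 2 := by
  rw [Complex.norm_real, Real.norm_eq_abs, sq_abs, div_pow, one_pow,
    Real.sq_sqrt (by norm_num : (0:ℝ) ≤ 2)]

lemma prob_formula (n : ℕ) (m : ℕ → ZMod n) (t : ℕ) (ht : 1 ≤ t) (x : ZMod n) :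
    ∑ d : Fin 2, ‖hadamardWalk n m t (d, x)‖ ^ 2 =
      (if x = ∑ i ∈ Finset.range t, m i then (1 / 2 : ℝ) else 0) +
      (if x = -∑ i ∈ Finset.range t, m i then (1 / 2 : ℝ) else 0) := by
  rw [Fin.sum_univ_two, walk_formula n m t ht (0, x), walk_formula n m t ht (1, x)]
  simp only [Prod.mk.injEq, show ((0:Fin 2) = 0) = True by simp,
    show ((0:Fin 2) = 1) = False by simp, show ((1:Fin 2) = 0) = False by simp,
    show ((1:Fin 2) = 1) = True by simp, true_and, false_and, if_false, if_true]
  split_ifs <;> simp [norm_c]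

lemma two_torsion (k n : ℕ) (hk : 1 ≤ k) (hn : n = 2 ^ k) (x : ZMod n)
    (hx : x = -x) : x = 0 ∨ x = ((2 ^ (k - 1) : ℕ) : ZMod n) := by
  subst hn
  haveI : NeZero (2 ^ k) := ⟨by positivity⟩
  have hxx : x + x = 0 := eq_neg_iff_add_eq_zero.mp hx
  have hcast : ((2 * x.val : ℕ) : ZMod (2 ^ k)) = 0 := by
    push_cast
    rw [ZMod.natCast_val, ZMod.cast_id]
    linear_combination hxx
  have hdvd : 2 ^ k ∣ 2 * x.val := (ZMod.natCast_eq_zero_iff _ _).mp hcast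
  have hvlt : x.val < 2 ^ k := ZMod.val_lt x
  have hkk : 2 ^ k = 2 * 2 ^ (k - 1) := by
    rw [← pow_succ']; congr 1; omega
  have hdvd' : 2 ^ (k - 1) ∣ x.val := by
    rcases hdvd with ⟨c, hc⟩
    refine ⟨c, ?_⟩
    have h2 : 2 * x.val = 2 * (2 ^ (k - 1) * c) := by rw [hc, hkk]; ring
    omega
  rcases hdvd' with ⟨c, hc⟩
  have hc2 : c < 2 := by
    by_contra h
    push_neg at h
    have h3 : 2 ^ k ≤ x.val := by
      rw [hc, hkk]
      calc 2 * 2 ^ (k - 1) ≤ 2 ^ (k - 1) * c := by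
            rw [mul_comm]; exact Nat.mul_le_mul_left _ h
        _ = 2 ^ (k - 1) * c := rfl
    omega
  interval_cases c
  · left
    have h0 : x.val = 0 := by omega
    rw [← ZMod.natCast_rightInverse x, h0, Nat.cast_zero]
  · right
    rw [← ZMod.natCast_rightInverse x, hc, mul_one]

/-- With `n = 2^k` and Derek playing a single Hadamard followed by identities,
at every step `t ≥ 1` each position `x` other than one reached identically in
both branches (`x = Σ_{i<t} m i = -Σ_{i<t} m i`) carries probability at most
`1/2`; in particular at most two positions are ever visited (probability 1). -/
theorem stmt_8 (k n : ℕ) (hk : 1 ≤ k) (hn : n = 2 ^ k) (m : ℕ → ZMod n) :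
    (∀ t : ℕ, 1 ≤ t → ∀ x : ZMod n,
      ¬(x = ∑ i ∈ Finset.range t, m i ∧ x = -∑ i ∈ Finset.range t, m i) →
      ∑ d : Fin 2, ‖hadamardWalk n m t (d, x)‖ ^ 2 ≤ 1 / 2) ∧
    ({x : ZMod n | ∃ t : ℕ, ∑ d : Fin 2, ‖hadamardWalk n m t (d, x)‖ ^ 2 = 1}.ncard ≤ 2) := by
  have key : ∀ t : ℕ, 1 ≤ t → ∀ x : ZMod n,
      ¬(x = ∑ i ∈ Finset.range t, m i ∧ x = -∑ i ∈ Finset.range t, m i) →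
      ∑ d : Fin 2, ‖hadamardWalk n m t (d, x)‖ ^ 2 ≤ 1 / 2 := by
    intro t ht x hx
    rw [prob_formula n m t ht x]
    by_cases h0 : x = ∑ i ∈ Finset.range t, m i <;>
      by_cases h1 : x = -∑ i ∈ Finset.range t, m i
    · exact absurd ⟨h0, h1⟩ hx
    · rw [if_pos h0, if_neg h1]; norm_num
    · rw [if_neg h0, if_pos h1]; norm_num
    · rw [if_neg h0, if_neg h1]; norm_num
  refine ⟨key, ?_⟩
  have hsub : {x : ZMod n | ∃ t : ℕ, ∑ d : Fin 2, ‖hadamardWalk n m t (d, x)‖ ^ 2 = 1} ⊆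
      {(0 : ZMod n), ((2 ^ (k - 1) : ℕ) : ZMod n)} := by
    rintro x ⟨t, ht⟩
    match t with
    | 0 =>
      by_cases hx0 : x = 0
      · exact Or.inl hx0
      · exfalso
        rw [Fin.sum_univ_two] at ht
        simp [hadamardWalk, Prod.ext_iff, hx0] at ht
    | Nat.succ s =>
      have h1 : (1 : ℕ) ≤ s + 1 := by omega
      by_cases hb : x = ∑ i ∈ Finset.range (s + 1), m i ∧
          x = -∑ i ∈ Finset.range (s + 1), m i
      · have hxx : x = -x := by
          conv_lhs => rw [hb.1]
          rw [← neg_neg (∑ i ∈ Finset.range (s + 1), m i), ← hb.2]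
        exact two_torsion k n hk hn x hxx
      · exfalso
        have := key (s + 1) h1 x hb
        rw [ht] at this
        norm_num at this
  calc ({x : ZMod n | ∃ t : ℕ, ∑ d : Fin 2, ‖hadamardWalk n m t (d, x)‖ ^ 2 = 1}).ncard
      ≤ ({(0 : ZMod n), ((2 ^ (k - 1) : ℕ) : ZMod n)} : Set (ZMod n)).ncard :=
        Set.ncard_le_ncard hsub (Set.toFinite _)
    _ ≤ 2 := by
        refine (Set.ncard_insert_le _ _).trans ?_
        simp
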